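/- Let A be an n×n SPD matrix and M an n×n matrix such that M + Mᵀ − A is SPD. Then the symmetrized smoother M̄ := M (M + Mᵀ − A)⁻¹ Mᵀ is SPD, and the iteration matrix satisfies (I − M̄⁻¹A) = (I − M⁻ᵀA)(I − M⁻¹A), so that ⟨A(I − M̄⁻¹A)v, v⟩ = ⟨A(I − M⁻¹A)v, (I − M⁻¹A)v⟩ ≥ 0 for all v; in particular the spectrum of M̄⁻¹A lies in (0, 1]. -/

import Mathlib

open Matrix

lemma posDef_mul_mul_transpose {n : ℕ} {W M : Matrix (Fin n) (Fin n) ℝ}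
    (hW : W.PosDef) (hM : IsUnit M) : (M * W * Mᵀ).PosDef := by
  have h := hW.posSemidef.mul_mul_conjTranspose_same M
  rw [conjTranspose_eq_transpose_of_trivial] at h
  refine PosDef.of_dotProduct_mulVec_pos h.1 (fun x hx => ?_)
  have hx' : Mᵀ.mulVec x ≠ 0 := by
    intro h0
    apply hx
    have hMT : IsUnit Mᵀ.det := by
      rw [det_transpose]; exact hM.map detMonoidHom
    have := congrArg (fun y => (Mᵀ)⁻¹.mulVec y) h0
    simpa [mulVec_mulVec, nonsing_inv_mul _ hMT] using this
  have key : star x ⬝ᵥ (M * W * Mᵀ).mulVec x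
      = (Mᵀ.mulVec x) ⬝ᵥ W.mulVec (Mᵀ.mulVec x) := by
    rw [star_trivial, ← mulVec_mulVec, ← mulVec_mulVec, dotProduct_mulVec,
      ← mulVec_transpose]
  rw [key]
  simpa [star_trivial] using hW.dotProduct_mulVec_pos hx'

theorem stmt5 {n : ℕ}
    (A M : Matrix (Fin n) (Fin n) ℝ) (hA : A.PosDef) (hM : IsUnit M)
    (hMA : (M + Mᵀ - A).PosDef) :
    (M * (M + Mᵀ - A)⁻¹ * Mᵀ).PosDef ∧
    (1 - (M * (M + Mᵀ - A)⁻¹ * Mᵀ)⁻¹ * A) = (1 - (Mᵀ)⁻¹ * A) * (1 - M⁻¹ * A) ∧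
    (∀ v : Fin n → ℝ,
      v ⬝ᵥ (A * (1 - (M * (M + Mᵀ - A)⁻¹ * Mᵀ)⁻¹ * A)).mulVec v
        = ((1 - M⁻¹ * A).mulVec v) ⬝ᵥ A.mulVec ((1 - M⁻¹ * A).mulVec v) ∧
      0 ≤ v ⬝ᵥ (A * (1 - (M * (M + Mᵀ - A)⁻¹ * Mᵀ)⁻¹ * A)).mulVec v) ∧
    (∀ μ ∈ spectrum ℝ ((M * (M + Mᵀ - A)⁻¹ * Mᵀ)⁻¹ * A), μ ∈ Set.Ioc (0 : ℝ) 1) := by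
  set W := M + Mᵀ - A with hWdef
  have hWu : IsUnit W.det := hMA.isUnit.map detMonoidHom
  have hMd : IsUnit M.det := hM.map detMonoidHom
  have hMTd : IsUnit Mᵀ.det := by rw [det_transpose]; exact hMd
  have hMM : M * M⁻¹ = 1 := mul_nonsing_inv _ hMd
  have hMT' : (Mᵀ)⁻¹ * Mᵀ = 1 := nonsing_inv_mul _ hMTd
  -- Part 1: positive definiteness of the symmetrized smoother
  have hT : (M * W⁻¹ * Mᵀ).PosDef := posDef_mul_mul_transpose hMA.inv hM
  -- inverse formula
  have hTinv : (M * W⁻¹ * Mᵀ)⁻¹ = (Mᵀ)⁻¹ + M⁻¹ - (Mᵀ)⁻¹ * A * M⁻¹ := by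
    rw [Matrix.mul_inv_rev, Matrix.mul_inv_rev, nonsing_inv_nonsing_inv _ hWu, hWdef]
    have h1 : (Mᵀ)⁻¹ * (M + Mᵀ - A) = (Mᵀ)⁻¹ * M + 1 - (Mᵀ)⁻¹ * A := by
      rw [Matrix.mul_sub, Matrix.mul_add, hMT']
    rw [← Matrix.mul_assoc, h1, Matrix.sub_mul, Matrix.add_mul, Matrix.one_mul,
      Matrix.mul_assoc, hMM, Matrix.mul_one]
  -- Part 2: the factorization identity
  have hfact : (1 - (M * W⁻¹ * Mᵀ)⁻¹ * A) = (1 - (Mᵀ)⁻¹ * A) * (1 - M⁻¹ * A) := by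
    rw [hTinv]
    noncomm_ring
  have hAsymm : Aᵀ = A := by
    have := hA.isHermitian.eq
    rwa [conjTranspose_eq_transpose_of_trivial] at this
  have hkey : A * (1 - (M * W⁻¹ * Mᵀ)⁻¹ * A)
      = (1 - M⁻¹ * A)ᵀ * A * (1 - M⁻¹ * A) := by
    rw [hfact, transpose_sub, transpose_one, transpose_mul, transpose_nonsing_inv,
      hAsymm]
    have h2 : (1 - A * (Mᵀ)⁻¹) * A = A * (1 - (Mᵀ)⁻¹ * A) := by
      rw [Matrix.sub_mul, Matrix.mul_sub, Matrix.one_mul, Matrix.mul_one,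
        Matrix.mul_assoc]
    rw [← Matrix.mul_assoc, h2]
  have heq : ∀ v : Fin n → ℝ, v ⬝ᵥ (A * (1 - (M * W⁻¹ * Mᵀ)⁻¹ * A)).mulVec v
      = ((1 - M⁻¹ * A).mulVec v) ⬝ᵥ A.mulVec ((1 - M⁻¹ * A).mulVec v) := by
    intro v
    rw [hkey, ← mulVec_mulVec, ← mulVec_mulVec, dotProduct_mulVec, vecMul_transpose]
  have hnonneg : ∀ v : Fin n → ℝ,
      0 ≤ v ⬝ᵥ (A * (1 - (M * W⁻¹ * Mᵀ)⁻¹ * A)).mulVec v := by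
    intro v
    rw [heq v]
    have := hA.posSemidef.dotProduct_mulVec_nonneg ((1 - M⁻¹ * A).mulVec v)
    simpa [star_trivial] using this
  refine ⟨hT, hfact, fun v => ⟨heq v, hnonneg v⟩, ?_⟩
  -- Part 4: spectrum
  intro μ hμ
  rw [spectrum.mem_iff] at hμ
  have hdet : ((algebraMap ℝ (Matrix (Fin n) (Fin n) ℝ)) μ - (M * W⁻¹ * Mᵀ)⁻¹ * A).det = 0 := by
    by_contra h
    exact hμ ((isUnit_iff_isUnit_det _).2 (isUnit_iff_ne_zero.2 h))
  obtain ⟨v, hv0, hv⟩ := (Matrix.exists_mulVec_eq_zero_iff).2 hdet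
  have halg : (algebraMap ℝ (Matrix (Fin n) (Fin n) ℝ)) μ = μ • 1 := by
    simp [Algebra.algebraMap_eq_smul_one]
  have heig : ((M * W⁻¹ * Mᵀ)⁻¹ * A).mulVec v = μ • v := by
    rw [halg] at hv
    have := congrArg (fun w => w + ((M * W⁻¹ * Mᵀ)⁻¹ * A).mulVec v) hv
    simpa [sub_mulVec, sub_add_cancel, smul_mulVec] using this.symm
  have hq : 0 < v ⬝ᵥ A.mulVec v := by
    have := hA.dotProduct_mulVec_pos hv0; simpa [star_trivial] using this
  have hw0 : A.mulVec v ≠ 0 := by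
    intro h0
    apply hv0
    have hAd : IsUnit A.det := hA.isUnit.map detMonoidHom
    have := congrArg (fun y => A⁻¹.mulVec y) h0
    simpa [mulVec_mulVec, nonsing_inv_mul _ hAd] using this
  have hTipd : (M * W⁻¹ * Mᵀ)⁻¹.PosDef := hT.inv
  have hpos : 0 < (A.mulVec v) ⬝ᵥ (M * W⁻¹ * Mᵀ)⁻¹.mulVec (A.mulVec v) := by
    have := hTipd.dotProduct_mulVec_pos hw0; simpa [star_trivial] using this
  have hcalc : (A.mulVec v) ⬝ᵥ (M * W⁻¹ * Mᵀ)⁻¹.mulVec (A.mulVec v)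
      = μ * (v ⬝ᵥ A.mulVec v) := by
    have h5 : (M * W⁻¹ * Mᵀ)⁻¹.mulVec (A.mulVec v) = μ • v := by
      rw [mulVec_mulVec]; exact heig
    rw [h5, dotProduct_smul, smul_eq_mul, dotProduct_comm]
  have hμpos : 0 < μ := by
    rw [hcalc] at hpos
    by_contra h
    push_neg at h
    nlinarith
  have hμle : μ ≤ 1 := by
    have h6 := hnonneg v
    have h7 : v ⬝ᵥ (A * (1 - (M * W⁻¹ * Mᵀ)⁻¹ * A)).mulVec v
        = (1 - μ) * (v ⬝ᵥ A.mulVec v) := by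
      rw [← mulVec_mulVec, sub_mulVec, one_mulVec, heig]
      rw [mulVec_sub, dotProduct_sub]
      rw [mulVec_smul, dotProduct_smul, smul_eq_mul]
      ring
    rw [h7] at h6
    nlinarith
  exact ⟨hμpos, hμle⟩
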